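/- Fix c ∈ (0,1) and let m be the unique nonnegative integer with 1/2 ≤ d := 2^m c < 1. Define sequences inductively: choose n₁ ≥ 1 with 1 − 1/2^{n₁} ≤ d < 1 − 1/2^{n₁+1}, set u₁ = 1 − 1/2^{n₁}, v₁ = 1 − 1/2^{n₁+1}, and given v₁,…,v_{i−1}, choose n_i with u_i = 1 − 1/2^{n_i} ≤ d/(v₁⋯v_{i−1}) < 1 − 1/2^{n_i+1} = v_i. Then the sequence (u_i) is non-decreasing and converges to 1, and consequently v₁v₂⋯v_{i−1}/2^m → c as i → ∞. -/

import Mathlib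

open Filter Finset

theorem greedy_dyadic_approx (c : ℝ) (hc : c ∈ Set.Ioo (0 : ℝ) 1)
    (m : ℕ) (d : ℝ) (hd : d = 2 ^ m * c) (hd1 : 1 / 2 ≤ d) (hd2 : d < 1)
    (n : ℕ → ℕ) (u v : ℕ → ℝ)
    (hn : ∀ i, 1 ≤ n i)
    (hu : ∀ i, u i = 1 - 1 / 2 ^ (n i))
    (hv : ∀ i, v i = 1 - 1 / 2 ^ (n i + 1))
    (hlb : ∀ i, u i ≤ d / ∏ j ∈ range i, v j)
    (hub : ∀ i, d / ∏ j ∈ range i, v j < v i) :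
    Monotone u ∧ Tendsto u atTop (nhds 1) ∧
      Tendsto (fun i => (∏ j ∈ range i, v j) / 2 ^ m) atTop (nhds c) := by
  have hv_lt_one : ∀ i, v i < 1 := by
    intro i; rw [hv i]
    have : (0:ℝ) < 1 / 2 ^ (n i + 1) := by positivity
    linarith
  have hv_ge : ∀ i, (3/4 : ℝ) ≤ v i := by
    intro i; rw [hv i]
    have h1 : (1:ℝ)/2^(n i + 1) ≤ 1/2^2 := by
      apply one_div_le_one_div_of_le (by positivity)
      exact pow_le_pow_right₀ one_le_two (by have := hn i; omega)
    norm_num at h1 ⊢; linarith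
  have hv_pos : ∀ i, (0:ℝ) < v i := fun i => lt_of_lt_of_le (by norm_num) (hv_ge i)
  set P : ℕ → ℝ := fun i => ∏ j ∈ range i, v j with hP
  have hPpos : ∀ i, 0 < P i := fun i => prod_pos (fun j _ => hv_pos j)
  set r : ℕ → ℝ := fun i => d / P i with hr
  have hr0 : r 0 = d := by simp [hr, hP]
  have hrec : ∀ i, r (i+1) = r i / v i := by
    intro i
    simp only [hr, hP, prod_range_succ]
    rw [div_div]
  have hviu : ∀ i, v i = (1 + u i)/2 := by
    intro i; rw [hv i, hu i, pow_succ]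
    have h2 : (2:ℝ)^(n i) ≠ 0 := by positivity
    field_simp
    ring
  have hrv : ∀ i, r i < v i := hub
  have hur : ∀ i, u i ≤ r i := hlb
  have hr_lt_one : ∀ i, r i < 1 := fun i => (hrv i).trans (hv_lt_one i)
  have hr_half : ∀ i, 1/2 ≤ r i := by
    intro i; induction i with
    | zero => rw [hr0]; exact hd1
    | succ k ih =>
      rw [hrec k]
      have h1 : r k ≤ r k / v k := by
        rw [le_div_iff₀ (hv_pos k)]
        nlinarith [hv_lt_one k]
      linarith
  have hr_pos : ∀ i, 0 < r i := fun i => lt_of_lt_of_le (by norm_num) (hr_half i)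
  have hmono_r : ∀ i, r i ≤ r (i+1) := by
    intro i; rw [hrec i, le_div_iff₀ (hv_pos i)]
    nlinarith [hv_lt_one i, hr_pos i]
  have hcontr : ∀ i, 1 - r (i+1) ≤ (2/3) * (1 - r i) := by
    intro i
    have hvle : v i ≤ (1 + r i)/2 := by rw [hviu i]; linarith [hur i]
    have heq : 1 - r (i+1) = (v i - r i) / v i := by
      rw [hrec i, sub_div, div_self (hv_pos i).ne']
    rw [heq, div_le_iff₀ (hv_pos i)]
    nlinarith [hv_ge i, hr_lt_one i]
  have hgeo : ∀ i, 1 - r i ≤ (2/3)^i * (1 - d) := by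
    intro i; induction i with
    | zero => simp [hr0]
    | succ k ih =>
      calc 1 - r (k+1) ≤ (2/3) * (1 - r k) := hcontr k
        _ ≤ (2/3) * ((2/3)^k * (1 - d)) := by nlinarith
        _ = (2/3)^(k+1) * (1 - d) := by ring
  have h23 : Tendsto (fun i => (2/3:ℝ)^i * (1 - d)) atTop (nhds 0) := by
    have h := tendsto_pow_atTop_nhds_zero_of_lt_one (by norm_num : (0:ℝ) ≤ 2/3) (by norm_num)
    simpa using h.mul_const (1 - d)
  have hrtend : Tendsto r atTop (nhds 1) := by
    apply tendsto_of_tendsto_of_tendsto_of_le_of_le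
      (g := fun i => 1 - (2/3:ℝ)^i * (1 - d)) (h := fun _ => (1:ℝ))
    · simpa using tendsto_const_nhds.sub h23
    · exact tendsto_const_nhds
    · intro i; linarith [hgeo i]
    · intro i; exact (hr_lt_one i).le
  have hmono : Monotone u := by
    apply monotone_nat_of_le_succ
    intro i
    have h1 : u i < v (i+1) :=
      lt_of_le_of_lt (le_trans (hur i) (hmono_r i)) (hrv (i+1))
    rw [hu i, hv (i+1)] at h1
    have h2 : (1:ℝ)/2^(n (i+1)+1) < 1/2^(n i) := by linarith
    have h3 : (2:ℝ)^(n i) < 2^(n (i+1)+1) := by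
      have ha : (0:ℝ) < 2^(n (i+1)+1) := by positivity
      have hb : (0:ℝ) < 2^(n i) := by positivity
      rw [div_lt_div_iff₀ ha hb] at h2
      linarith
    have h4 : n i < n (i+1) + 1 := by
      exact_mod_cast (pow_lt_pow_iff_right₀ (by norm_num : (1:ℝ) < 2)).mp h3
    have h5 : n i ≤ n (i+1) := Nat.lt_succ_iff.mp h4
    rw [hu i, hu (i+1)]
    have h6 : (1:ℝ)/2^(n (i+1)) ≤ 1/2^(n i) := by
      apply one_div_le_one_div_of_le (by positivity)
      exact pow_le_pow_right₀ one_le_two h5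
    linarith
  have hlow : ∀ i, 2 * r i - 1 ≤ u i := by
    intro i
    have h := hrv i
    rw [hviu i] at h
    linarith
  have hutend : Tendsto u atTop (nhds 1) := by
    apply tendsto_of_tendsto_of_tendsto_of_le_of_le
      (g := fun i => 2 * r i - 1) (h := r)
    · have h := (hrtend.const_mul (2:ℝ)).sub_const 1
      norm_num at h
      exact h
    · exact hrtend
    · exact hlow
    · exact hur
  have hdpos : (0:ℝ) < d := lt_of_lt_of_le (by norm_num) hd1
  have hPeq : ∀ i, P i = d / r i := by
    intro i
    rw [hr]
    field_simp
  have h1 : Tendsto (fun i => d / r i) atTop (nhds d) := by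
    have h := tendsto_const_nhds.div hrtend (one_ne_zero) (f := fun _ : ℕ => d)
    rw [div_one] at h; exact h
  have h2 : Tendsto P atTop (nhds d) := h1.congr (fun i => (hPeq i).symm)
  have h3 : Tendsto (fun i => P i / 2^m) atTop (nhds (d / 2^m)) := h2.div_const _
  have hdc : d / 2^m = c := by
    rw [hd]
    field_simp
  rw [hdc] at h3
  exact ⟨hmono, hutend, h3⟩
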